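/- Let g be a real polynomial. Then the following are equivalent: (a) there exist an integer d ≥ deg(g) and real numbers α_0, α_1, …, α_d with α_0 = 0, α_d = 1 and 0 ≤ α_k ≤ 1 for all 1 ≤ k ≤ d−1, such that g(x) = Σ_{k=0}^d α_k · b_{k,d}(x); (b) g(0) = 0, g(1) = 1, and 0 < g(x) < 1 for all x ∈ (0,1). -/

import Mathlib

/-!
A polynomial `g` can be written in some Bernstein basis of degree `d ≥ deg g` with
coefficients `α_0 = 0`, `α_d = 1`, `α_k ∈ [0,1]` for `1 ≤ k ≤ d-1`, if and only if
`g(0) = 0`, `g(1) = 1` and `0 < g(x) < 1` on `(0,1)`.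
-/

open Polynomial Finset

lemma bern_def (e k : ℕ) : bernsteinPolynomial ℝ e k = (e.choose k : ℝ) • (X ^ k * (1 - X) ^ (e - k)) := by
  simp [bernsteinPolynomial, Polynomial.smul_eq_C_mul, mul_assoc]

lemma sum_choose_bern (e i : ℕ) (hie : i ≤ e) :
    ∑ k ∈ range (e + 1), (k.choose i : ℝ) • bernsteinPolynomial ℝ e k
      = (e.choose i : ℝ) • (X ^ i : ℝ[X]) := by
  have h1 : ∀ k ∈ range (e + 1),
      (k.choose i : ℝ) • bernsteinPolynomial ℝ e k
        = (e.choose i : ℝ) • (if i ≤ k then (X:ℝ[X]) ^ i * bernsteinPolynomial ℝ (e - i) (k - i) else 0) := by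
    intro k hk
    rw [mem_range, Nat.lt_succ_iff] at hk
    by_cases hik : i ≤ k
    · simp only [if_pos hik, bern_def]
      have key : (e.choose k) * (k.choose i) = e.choose i * ((e - i).choose (k - i)) := by
        rw [← Nat.choose_mul (n := e) hik, mul_comm]
      have hsub : e - i - (k - i) = e - k := by omega
      have hX : (X:ℝ[X]) ^ i * ((X:ℝ[X]) ^ (k - i) * (1 - X) ^ (e - i - (k - i)))
          = X ^ k * (1 - X) ^ (e - k) := by
        rw [hsub, ← mul_assoc, ← pow_add]
        congr 2
        omega
      rw [mul_smul_comm, smul_smul, smul_smul, hX]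
      congr 1
      norm_cast
      linarith [key]
    · simp [Nat.choose_eq_zero_of_lt (by omega : k < i), hik]
  rw [Finset.sum_congr rfl h1, ← Finset.smul_sum]
  congr 1
  have h2 : ∑ k ∈ range (e + 1),
      (if i ≤ k then (X:ℝ[X]) ^ i * bernsteinPolynomial ℝ (e - i) (k - i) else 0)
      = ∑ j ∈ range (e - i + 1), (X:ℝ[X]) ^ i * bernsteinPolynomial ℝ (e - i) j := by
    rw [range_eq_Ico, ← Finset.sum_Ico_consecutive _ (Nat.zero_le i) (by omega : i ≤ e + 1)]
    have hz : ∑ k ∈ Ico 0 i, (if i ≤ k then (X:ℝ[X]) ^ i * bernsteinPolynomial ℝ (e - i) (k - i) else 0) = 0 := by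
      apply Finset.sum_eq_zero
      intro k hk
      rw [mem_Ico] at hk
      rw [if_neg (by omega)]
    rw [hz, zero_add, Finset.sum_Ico_eq_sum_range]
    have hr : e + 1 - i = e - i + 1 := by omega
    rw [hr]
    apply Finset.sum_congr rfl
    intro j hj
    rw [if_pos (by omega)]
    congr 2
    omega
  rw [h2, ← Finset.mul_sum, bernsteinPolynomial.sum, mul_one]

noncomputable def bcoef (h : ℝ[X]) (e k : ℕ) : ℝ :=
  ∑ i ∈ range (h.natDegree + 1), h.coeff i * (k.choose i : ℝ) / (e.choose i : ℝ)

lemma bern_rep (h : ℝ[X]) (e : ℕ) (he : h.natDegree ≤ e) :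
    h = ∑ k ∈ range (e + 1), (bcoef h e k) • bernsteinPolynomial ℝ e k := by
  have hstep : ∀ k, (bcoef h e k) • bernsteinPolynomial ℝ e k
      = ∑ i ∈ range (h.natDegree + 1),
          (h.coeff i / (e.choose i : ℝ)) • ((k.choose i : ℝ) • bernsteinPolynomial ℝ e k) := by
    intro k
    rw [bcoef, Finset.sum_smul]
    apply Finset.sum_congr rfl
    intro i _
    rw [smul_smul]
    congr 1
    ring
  simp_rw [hstep]
  rw [Finset.sum_comm]
  have hinner : ∀ i ∈ range (h.natDegree + 1),
      (∑ k ∈ range (e + 1), (h.coeff i / (e.choose i : ℝ)) • ((k.choose i : ℝ) • bernsteinPolynomial ℝ e k))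
        = h.coeff i • (X ^ i : ℝ[X]) := by
    intro i hi
    rw [mem_range, Nat.lt_succ_iff] at hi
    rw [← Finset.smul_sum, sum_choose_bern e i (hi.trans he), smul_smul,
      div_mul_cancel₀]
    exact Nat.cast_ne_zero.mpr (Nat.choose_pos (hi.trans he)).ne'
  rw [Finset.sum_congr rfl hinner]
  conv_lhs => rw [h.as_sum_range' (h.natDegree + 1) (Nat.lt_succ_self _)]
  apply Finset.sum_congr rfl
  intro i _
  rw [Polynomial.smul_eq_C_mul, ← Polynomial.C_mul_X_pow_eq_monomial]

lemma choose_ratio_eq_prod (e i k : ℕ) :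
    (k.choose i : ℝ) / (e.choose i : ℝ)
      = ∏ j ∈ range i, (((k - j : ℕ) : ℝ) / ((e - j : ℕ) : ℝ)) := by
  rw [Finset.prod_div_distrib, ← Nat.cast_prod, ← Nat.cast_prod,
    ← Nat.descFactorial_eq_prod_range, ← Nat.descFactorial_eq_prod_range,
    Nat.descFactorial_eq_factorial_mul_choose, Nat.descFactorial_eq_factorial_mul_choose]
  push_cast
  rw [mul_div_mul_left]
  exact Nat.cast_ne_zero.mpr i.factorial_ne_zero

lemma prod_abs_sub_le (f g : ℕ → ℝ) (ε : ℝ) (hε : 0 ≤ ε) (i : ℕ)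
    (hf : ∀ j < i, 0 ≤ f j ∧ f j ≤ 1) (hg : ∀ j < i, 0 ≤ g j ∧ g j ≤ 1)
    (hfg : ∀ j < i, |f j - g j| ≤ ε) :
    |∏ j ∈ range i, f j - ∏ j ∈ range i, g j| ≤ i * ε := by
  induction i with
  | zero => simp
  | succ m ih =>
    have h1 : |∏ j ∈ range m, f j - ∏ j ∈ range m, g j| ≤ m * ε :=
      ih (fun j hj => hf j (by omega)) (fun j hj => hg j (by omega)) (fun j hj => hfg j (by omega))
    have hfb : 0 ≤ ∏ j ∈ range m, f j ∧ ∏ j ∈ range m, f j ≤ 1 := by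
      constructor
      · exact Finset.prod_nonneg fun j hj => (hf j (by simp at hj; omega)).1
      · exact Finset.prod_le_one (fun j hj => (hf j (by simp at hj; omega)).1)
          (fun j hj => (hf j (by simp at hj; omega)).2)
    have hgb : 0 ≤ ∏ j ∈ range m, g j ∧ ∏ j ∈ range m, g j ≤ 1 := by
      constructor
      · exact Finset.prod_nonneg fun j hj => (hg j (by simp at hj; omega)).1
      · exact Finset.prod_le_one (fun j hj => (hg j (by simp at hj; omega)).1)
          (fun j hj => (hg j (by simp at hj; omega)).2)
    rw [Finset.prod_range_succ, Finset.prod_range_succ]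
    have key : (∏ j ∈ range m, f j) * f m - (∏ j ∈ range m, g j) * g m
        = (∏ j ∈ range m, f j - ∏ j ∈ range m, g j) * f m
          + (∏ j ∈ range m, g j) * (f m - g m) := by ring
    rw [key]
    calc |((∏ j ∈ range m, f j) - ∏ j ∈ range m, g j) * f m
          + (∏ j ∈ range m, g j) * (f m - g m)|
        ≤ |(∏ j ∈ range m, f j - ∏ j ∈ range m, g j) * f m|
          + |(∏ j ∈ range m, g j) * (f m - g m)| := abs_add_le _ _
      _ ≤ m * ε * 1 + 1 * ε := by
          rw [abs_mul, abs_mul]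
          have hfm := hf m (by omega)
          have h2 : |f m| ≤ 1 := by rw [abs_of_nonneg hfm.1]; exact hfm.2
          have h3 : |∏ j ∈ range m, g j| ≤ 1 := by rw [abs_of_nonneg hgb.1]; exact hgb.2
          have h4 := hfg m (by omega)
          have h5 := mul_le_mul h1 h2 (abs_nonneg _) (by positivity)
          have h6 := mul_le_mul h3 h4 (abs_nonneg _) zero_le_one
          nlinarith [abs_nonneg (f m - g m)]
      _ = ((m + 1 : ℕ) : ℝ) * ε := by push_cast; ring
    
lemma factor_bound (n e k j : ℕ) (hne : n < e) (hk : k ≤ e) (hj : j < n) :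
    |((k - j : ℕ) : ℝ) / ((e - j : ℕ) : ℝ) - (k : ℝ) / (e : ℝ)| ≤ (n : ℝ) / ((e : ℝ) - n) := by
  have he0 : (0:ℝ) < e := by exact_mod_cast (by omega : 0 < e)
  have hen : (0:ℝ) < (e:ℝ) - n := by
    have : (n:ℝ) < e := by exact_mod_cast hne
    linarith
  by_cases hjk : j ≤ k
  · rw [Nat.cast_sub hjk, Nat.cast_sub (by omega : j ≤ e)]
    have hej : (0:ℝ) < (e:ℝ) - j := by
      have : (j:ℝ) < e := by exact_mod_cast (by omega : j < e)
      linarith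
    have hkr : (k:ℝ) ≤ e := by exact_mod_cast hk
    have hjr : (j:ℝ) ≤ n := by exact_mod_cast hj.le
    have hjn : (j:ℝ) < n := by exact_mod_cast hj
    have hkj : (j:ℝ) ≤ k := by exact_mod_cast hjk
    have hnum : ((k:ℝ) - j) / ((e:ℝ) - j) - (k:ℝ) / e
        = -((j:ℝ) * ((e:ℝ) - k)) / (((e:ℝ) - j) * e) := by
      field_simp
      ring
    rw [hnum, abs_div, abs_neg, abs_of_nonneg (by nlinarith), abs_of_pos (by positivity),
      div_le_div_iff₀ (by positivity) hen]
    have c1 : (0:ℝ) ≤ (e:ℝ) - k := by linarith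
    have c2 : (0:ℝ) ≤ (e:ℝ) - n := hen.le
    have c3 : ((e:ℝ) - n) ≤ (e:ℝ) - j := by linarith
    have s1 : (j:ℝ)*(((e:ℝ)-k)*((e:ℝ)-n)) ≤ n*(((e:ℝ)-k)*((e:ℝ)-n)) :=
      mul_le_mul_of_nonneg_right hjr (by positivity)
    have s2 : ((e:ℝ)-k)*((e:ℝ)-n) ≤ (e:ℝ)*((e:ℝ)-j) := mul_le_mul (by linarith) c3 c2 he0.le
    have s3 : (n:ℝ)*(((e:ℝ)-k)*((e:ℝ)-n)) ≤ (n:ℝ)*((e:ℝ)*((e:ℝ)-j)) :=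
      mul_le_mul_of_nonneg_left s2 (Nat.cast_nonneg n)
    nlinarith [s1, s3]
  · have : k - j = 0 := by omega
    rw [this]
    simp only [Nat.cast_zero, zero_div, zero_sub, abs_neg]
    rw [abs_of_nonneg (by positivity)]
    rw [div_le_div_iff₀ he0 hen]
    have hkr : (k:ℝ) ≤ n := by exact_mod_cast (by omega : k ≤ n)
    have hnr : (n:ℝ) < e := by exact_mod_cast hne
    nlinarith [Nat.cast_nonneg (α := ℝ) n, Nat.cast_nonneg (α := ℝ) k]



-- per-i ratio bound
lemma ratio_close (n e k i : ℕ) (hne : n < e) (hk : k ≤ e) (hi : i ≤ n) :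
    |(k.choose i : ℝ) / (e.choose i : ℝ) - ((k : ℝ) / (e : ℝ)) ^ i|
      ≤ (n : ℝ) ^ 2 / ((e : ℝ) - n) := by
  have hen : (0:ℝ) < (e:ℝ) - n := by
    have : (n:ℝ) < e := by exact_mod_cast hne
    linarith
  have he0 : (0:ℝ) < e := by exact_mod_cast (by omega : 0 < e)
  have hke : (k:ℝ) ≤ e := by exact_mod_cast hk
  have hε : (0:ℝ) ≤ (n:ℝ) / ((e:ℝ) - n) := by positivity
  have hmain := prod_abs_sub_le
    (fun j => ((k - j : ℕ) : ℝ) / ((e - j : ℕ) : ℝ)) (fun _ => (k : ℝ) / (e : ℝ))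
    ((n : ℝ) / ((e : ℝ) - n)) hε i
    (by
      intro j hj
      have hje : j < e := by omega
      have h1 : (0:ℝ) < ((e - j : ℕ) : ℝ) := by exact_mod_cast (by omega : 0 < e - j)
      constructor
      · positivity
      · rw [div_le_one h1]
        exact_mod_cast (by omega : k - j ≤ e - j))
    (by
      intro j hj
      exact ⟨by positivity, by rw [div_le_one he0]; exact hke⟩)
    (by
      intro j hj
      exact factor_bound n e k j hne hk (by omega))
  rw [choose_ratio_eq_prod]
  rw [Finset.prod_const] at hmain
  calc |(∏ j ∈ range i, ((k - j : ℕ) : ℝ) / ((e - j : ℕ) : ℝ)) - ((k:ℝ)/(e:ℝ)) ^ i|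
      ≤ i * ((n : ℝ) / ((e : ℝ) - n)) := by
        have : (Finset.range i).card = i := Finset.card_range i
        simpa [this] using hmain
    _ ≤ (n : ℝ) ^ 2 / ((e : ℝ) - n) := by
        rw [pow_two, mul_div_assoc]
        apply mul_le_mul_of_nonneg_right _ hε
        exact_mod_cast hi

lemma bcoef_nonneg (h : ℝ[X]) (hpos : ∀ x ∈ Set.Icc (0:ℝ) 1, 0 < h.eval x) :
    ∃ E : ℕ, h.natDegree < E ∧ ∀ e, E ≤ e → ∀ k, k ≤ e → 0 ≤ bcoef h e k := by
  set n := h.natDegree with hn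
  -- minimum of h on [0,1]
  obtain ⟨x₀, hx₀, hmin'⟩ := (isCompact_Icc (a := (0:ℝ)) (b := 1)).exists_isMinOn
    (Set.nonempty_Icc.mpr zero_le_one) ((h.continuous_aeval).continuousOn)
  have hmin : ∀ y ∈ Set.Icc (0:ℝ) 1, h.eval x₀ ≤ h.eval y := fun y hy => hmin' hy
  set δ := h.eval x₀ with hδ
  have hδ0 : 0 < δ := hpos x₀ hx₀
  set A := ∑ i ∈ range (n + 1), |h.coeff i| with hA
  have hA0 : 0 ≤ A := Finset.sum_nonneg fun i _ => abs_nonneg _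
  obtain ⟨B, hB⟩ := exists_nat_gt (A * (n:ℝ)^2 / δ)
  refine ⟨n + B + 1, by omega, ?_⟩
  intro e he k hk
  have hne : n < e := by omega
  have hen : (0:ℝ) < (e:ℝ) - n := by
    have : (n:ℝ) < e := by exact_mod_cast hne
    linarith
  have he0 : (0:ℝ) < e := by exact_mod_cast (by omega : 0 < e)
  have hx : (k:ℝ)/(e:ℝ) ∈ Set.Icc (0:ℝ) 1 := by
    constructor
    · positivity
    · rw [div_le_one he0]; exact_mod_cast hk
  have heval : h.eval ((k:ℝ)/(e:ℝ)) = ∑ i ∈ range (n + 1), h.coeff i * ((k:ℝ)/(e:ℝ))^i := by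
    rw [Polynomial.eval_eq_sum_range]
  have hdiff : |bcoef h e k - h.eval ((k:ℝ)/(e:ℝ))| ≤ A * (n:ℝ)^2 / ((e:ℝ) - n) := by
    rw [heval, bcoef, ← Finset.sum_sub_distrib]
    calc |∑ i ∈ range (n + 1), (h.coeff i * (k.choose i : ℝ) / (e.choose i : ℝ)
            - h.coeff i * ((k:ℝ)/(e:ℝ))^i)|
        ≤ ∑ i ∈ range (n + 1), |h.coeff i * (k.choose i : ℝ) / (e.choose i : ℝ)
            - h.coeff i * ((k:ℝ)/(e:ℝ))^i| := Finset.abs_sum_le_sum_abs _ _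
      _ ≤ ∑ i ∈ range (n + 1), |h.coeff i| * ((n:ℝ)^2 / ((e:ℝ) - n)) := by
          apply Finset.sum_le_sum
          intro i hi
          rw [mem_range, Nat.lt_succ_iff] at hi
          have := ratio_close n e k i hne hk hi
          calc |h.coeff i * (k.choose i : ℝ) / (e.choose i : ℝ)
                  - h.coeff i * ((k:ℝ)/(e:ℝ))^i|
              = |h.coeff i| * |(k.choose i : ℝ) / (e.choose i : ℝ) - ((k:ℝ)/(e:ℝ))^i| := by
                rw [← abs_mul]
                congr 1
                ring
            _ ≤ |h.coeff i| * ((n:ℝ)^2 / ((e:ℝ) - n)) :=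
                mul_le_mul_of_nonneg_left this (abs_nonneg _)
      _ = A * (n:ℝ)^2 / ((e:ℝ) - n) := by
          rw [← Finset.sum_mul, ← hA, mul_div_assoc]
  have hsmall : A * (n:ℝ)^2 / ((e:ℝ) - n) < δ := by
    rw [div_lt_iff₀ hen]
    have hBe : (B:ℝ) ≤ (e:ℝ) - n := by
      have : (n + B : ℕ) < e := by omega
      have : ((n + B : ℕ):ℝ) < e := by exact_mod_cast this
      push_cast at this
      linarith
    have h1 : A * (n:ℝ)^2 < δ * B := by
      rw [div_lt_iff₀ hδ0] at hB
      linarith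
    calc A * (n:ℝ)^2 < δ * B := h1
      _ ≤ δ * ((e:ℝ) - n) := mul_le_mul_of_nonneg_left hBe hδ0.le
  have hm : δ ≤ h.eval ((k:ℝ)/(e:ℝ)) := hmin _ hx
  have := abs_le.mp hdiff
  linarith



lemma X_pow_mul_bern (e k r : ℕ) (hk : k ≤ e) :
    (X:ℝ[X])^r * bernsteinPolynomial ℝ e k
      = ((e.choose k : ℝ) / ((e+r).choose (k+r) : ℝ)) • bernsteinPolynomial ℝ (e+r) (k+r) := by
  rw [bern_def, bern_def, smul_smul]
  have h1 : ((e+r).choose (k+r) : ℝ) ≠ 0 :=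
    Nat.cast_ne_zero.mpr (Nat.choose_pos (by omega)).ne'
  have h2 : (e.choose k : ℝ) / ((e+r).choose (k+r) : ℝ) * ((e+r).choose (k+r) : ℝ)
      = (e.choose k : ℝ) := div_mul_cancel₀ _ h1
  rw [h2, mul_smul_comm]
  congr 1
  have : e + r - (k + r) = e - k := by omega
  rw [this, ← mul_assoc, ← pow_add]
  congr 2
  omega

lemma one_sub_X_pow_mul_bern (e k s : ℕ) (hk : k ≤ e) :
    ((1:ℝ[X]) - X)^s * bernsteinPolynomial ℝ e k
      = ((e.choose k : ℝ) / ((e+s).choose k : ℝ)) • bernsteinPolynomial ℝ (e+s) k := by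
  rw [bern_def, bern_def, smul_smul]
  have h1 : ((e+s).choose k : ℝ) ≠ 0 :=
    Nat.cast_ne_zero.mpr (Nat.choose_pos (by omega)).ne'
  have h2 : (e.choose k : ℝ) / ((e+s).choose k : ℝ) * ((e+s).choose k : ℝ)
      = (e.choose k : ℝ) := div_mul_cancel₀ _ h1
  rw [h2, mul_smul_comm]
  congr 1
  have : e + s - k = (e - k) + s := by omega
  rw [this, pow_add]
  ring

lemma bern_coeff_unique (d : ℕ) (c : ℕ → ℝ)
    (hz : ∑ k ∈ range (d+1), c k • bernsteinPolynomial ℝ d k = 0) :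
    ∀ k ≤ d, c k = 0 := by
  intro k
  induction k using Nat.strong_induction_on with
  | _ k ih =>
    intro hk
    have h0 : ∑ j ∈ range (d+1),
        c j * (Polynomial.derivative^[k] (bernsteinPolynomial ℝ d j)).eval 0 = 0 := by
      have h1 := congrArg (fun p : ℝ[X] => (Polynomial.derivative^[k] p).eval 0) hz
      simp only [Polynomial.iterate_derivative_sum, Polynomial.iterate_derivative_smul,
        Polynomial.eval_finset_sum, Polynomial.eval_smul, smul_eq_mul, Function.iterate_fixed
        ] at h1
      simpa using h1
    rw [Finset.sum_eq_single k] at h0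
    · have hne := bernsteinPolynomial.iterate_derivative_at_0_ne_zero ℝ d k hk
      exact (mul_eq_zero.mp h0).resolve_right hne
    · intro j hj hjk
      rcases lt_or_gt_of_ne hjk with h | h
      · rw [ih j h (by omega), zero_mul]
      · rw [bernsteinPolynomial.iterate_derivative_at_0_eq_zero_of_lt ℝ d h, mul_zero]
    · intro hkk
      exact absurd (Finset.mem_range.mpr (by omega : k < d + 1)) hkk



-- eval of bernstein on (0,1) is positive (k ≤ d)
lemma bern_eval_pos (d k : ℕ) (hk : k ≤ d) {x : ℝ} (hx : x ∈ Set.Ioo (0:ℝ) 1) :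
    0 < (bernsteinPolynomial ℝ d k).eval x := by
  obtain ⟨h0, h1⟩ := hx
  rw [bern_def]
  simp only [Polynomial.eval_smul, Polynomial.eval_mul, Polynomial.eval_pow, Polynomial.eval_sub,
    Polynomial.eval_one, Polynomial.eval_X, smul_eq_mul]
  have := Nat.choose_pos hk
  have h2 : (0:ℝ) < 1 - x := by linarith
  positivity

lemma bern_eval_nonneg (d k : ℕ) {x : ℝ} (h0 : 0 ≤ x) (h1 : x ≤ 1) :
    0 ≤ (bernsteinPolynomial ℝ d k).eval x := by
  rw [bern_def]
  simp only [Polynomial.eval_smul, Polynomial.eval_mul, Polynomial.eval_pow, Polynomial.eval_sub,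
    Polynomial.eval_one, Polynomial.eval_X, smul_eq_mul]
  have h2 : (0:ℝ) ≤ 1 - x := by linarith
  positivity

lemma sum_shift (d r : ℕ) (hrd : r ≤ d) (f : ℕ → ℝ[X]) (hf : ∀ j, j < r → f j = 0) :
    ∑ j ∈ range (d + 1), f j = ∑ k ∈ range (d - r + 1), f (k + r) := by
  rw [range_eq_Ico, ← Finset.sum_Ico_consecutive _ (Nat.zero_le r) (by omega : r ≤ d + 1),
    Finset.sum_eq_zero (fun j hj => hf j (mem_Ico.mp hj).2), zero_add,
    Finset.sum_Ico_eq_sum_range]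
  have hc : d + 1 - r = d - r + 1 := by omega
  rw [hc]
  apply Finset.sum_congr rfl
  intro k _
  congr 1
  omega

theorem random_outcome_representation (g : Polynomial ℝ) :
    (∃ d : ℕ, g.natDegree ≤ d ∧ ∃ α : ℕ → ℝ,
      α 0 = 0 ∧ α d = 1 ∧ (∀ k, 1 ≤ k → k ≤ d - 1 → 0 ≤ α k ∧ α k ≤ 1) ∧
      g = ∑ k ∈ Finset.range (d + 1), Polynomial.C (α k) * bernsteinPolynomial ℝ d k)
    ↔ (g.eval 0 = 0 ∧ g.eval 1 = 1 ∧
        ∀ x ∈ Set.Ioo (0 : ℝ) 1, 0 < g.eval x ∧ g.eval x < 1) := by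
  constructor
  · rintro ⟨d, hdeg, α, hα0, hαd, hmid, hrep⟩
    have hd1 : 1 ≤ d := by
      by_contra hd
      have : d = 0 := by omega
      subst this
      rw [hα0] at hαd
      norm_num at hαd
    have hnn : ∀ k ≤ d, 0 ≤ α k := by
      intro k hk
      rcases Nat.eq_zero_or_pos k with rfl | hk1
      · rw [hα0]
      rcases eq_or_lt_of_le hk with rfl | hk2
      · rw [hαd]; norm_num
      · exact (hmid k hk1 (by omega)).1
    have hle : ∀ k ≤ d, α k ≤ 1 := by
      intro k hk
      rcases Nat.eq_zero_or_pos k with rfl | hk1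
      · rw [hα0]; norm_num
      rcases eq_or_lt_of_le hk with rfl | hk2
      · rw [hαd]
      · exact (hmid k hk1 (by omega)).2
    have heval : ∀ x : ℝ, g.eval x = ∑ k ∈ range (d + 1), α k * (bernsteinPolynomial ℝ d k).eval x := by
      intro x
      rw [hrep]
      simp [Polynomial.eval_finset_sum]
    have hsum1 : ∀ x : ℝ, ∑ k ∈ range (d + 1), (bernsteinPolynomial ℝ d k).eval x = 1 := by
      intro x
      have := congrArg (Polynomial.eval x) (bernsteinPolynomial.sum ℝ d)
      simpa [Polynomial.eval_finset_sum] using this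
    refine ⟨?_, ?_, ?_⟩
    · rw [heval 0]
      rw [Finset.sum_eq_single 0]
      · simp [bernsteinPolynomial.eval_at_0, hα0]
      · intro k _ hk
        simp [bernsteinPolynomial.eval_at_0, hk]
      · intro hk
        simp at hk
    · rw [heval 1]
      rw [Finset.sum_eq_single d]
      · simp [bernsteinPolynomial.eval_at_1, hαd]
      · intro k hk hkd
        simp [bernsteinPolynomial.eval_at_1, hkd]
      · intro hk
        simp at hk
    · intro x hx
      constructor
      · rw [heval x]
        have hterm : α d * (bernsteinPolynomial ℝ d d).eval x
            ≤ ∑ k ∈ range (d + 1), α k * (bernsteinPolynomial ℝ d k).eval x := by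
          apply Finset.single_le_sum (f := fun k => α k * (bernsteinPolynomial ℝ d k).eval x)
          · intro k hk
            rw [mem_range, Nat.lt_succ_iff] at hk
            exact mul_nonneg (hnn k hk) (bern_eval_nonneg d k hx.1.le hx.2.le)
          · exact Finset.mem_range.mpr (by omega)
        have hpos : 0 < α d * (bernsteinPolynomial ℝ d d).eval x := by
          rw [hαd, one_mul]
          exact bern_eval_pos d d le_rfl hx
        linarith
      · have h1g : 0 < 1 - g.eval x := by
          have hkey : ∑ k ∈ range (d + 1), (1 - α k) * (bernsteinPolynomial ℝ d k).eval x
              = 1 - g.eval x := by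
            have hsplit : ∑ k ∈ range (d + 1), (1 - α k) * (bernsteinPolynomial ℝ d k).eval x
                = (∑ k ∈ range (d + 1), (bernsteinPolynomial ℝ d k).eval x)
                  - ∑ k ∈ range (d + 1), α k * (bernsteinPolynomial ℝ d k).eval x := by
              rw [← Finset.sum_sub_distrib]
              apply Finset.sum_congr rfl
              intro k _
              ring
            rw [hsplit, hsum1 x, ← heval x]
          rw [← hkey]
          have hterm : (1 - α 0) * (bernsteinPolynomial ℝ d 0).eval x
              ≤ ∑ k ∈ range (d + 1), (1 - α k) * (bernsteinPolynomial ℝ d k).eval x := by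
            apply Finset.single_le_sum (f := fun k => (1 - α k) * (bernsteinPolynomial ℝ d k).eval x)
            · intro k hk
              rw [mem_range, Nat.lt_succ_iff] at hk
              exact mul_nonneg (by linarith [hle k hk]) (bern_eval_nonneg d k hx.1.le hx.2.le)
            · exact Finset.mem_range.mpr (by omega)
          have hpos : 0 < (1 - α 0) * (bernsteinPolynomial ℝ d 0).eval x := by
            rw [hα0, sub_zero, one_mul]
            exact bern_eval_pos d 0 (by omega) hx
          linarith
        linarith
  · rintro ⟨h0, h1, hmid⟩
    -- positivity of g on (0,1]
    have hgIoc : ∀ x ∈ Set.Ioc (0:ℝ) 1, 0 < g.eval x := by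
      intro x hx
      rcases eq_or_lt_of_le hx.2 with rfl | hlt
      · rw [h1]; norm_num
      · exact (hmid x ⟨hx.1, hlt⟩).1
    have hwIco : ∀ x ∈ Set.Ico (0:ℝ) 1, 0 < 1 - g.eval x := by
      intro x hx
      rcases eq_or_lt_of_le hx.1 with rfl | hlt
      · rw [h0]; norm_num
      · have := (hmid x ⟨hlt, hx.2⟩).2
        linarith
    have hg0 : g ≠ 0 := fun hg => by simp [hg] at h1
    -- factor g = X^r * h
    obtain ⟨h, hgh, hnd⟩ := g.exists_eq_pow_rootMultiplicity_mul_and_not_dvd hg0 0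
    set r := g.rootMultiplicity 0 with hr
    rw [map_zero, sub_zero] at hgh hnd
    have hh0 : h.eval 0 ≠ 0 := fun hz => hnd (Polynomial.X_dvd_iff.mpr (by
      rw [Polynomial.coeff_zero_eq_eval_zero]
      exact hz))
    have hhIoc : ∀ x ∈ Set.Ioc (0:ℝ) 1, 0 < h.eval x := by
      intro x hx
      have hgx := hgIoc x hx
      rw [hgh] at hgx
      simp only [Polynomial.eval_mul, Polynomial.eval_pow, Polynomial.eval_X] at hgx
      have hxr : (0:ℝ) < x ^ r := pow_pos hx.1 r
      nlinarith [hgx, hxr, mul_pos hxr (lt_of_not_ge (fun hle : h.eval x ≤ 0 => by nlinarith))]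
    have hhIcc : ∀ x ∈ Set.Icc (0:ℝ) 1, 0 < h.eval x := by
      intro x hx
      rcases eq_or_lt_of_le hx.1 with rfl | hlt
      · -- x = 0
        rcases lt_or_gt_of_ne hh0 with hneg | hpos
        · exfalso
          have hc : ContinuousOn (fun y => h.eval y) (Set.Icc (0:ℝ) 1) :=
            (h.continuous_aeval).continuousOn
          have h1pos : 0 < h.eval 1 := hhIoc 1 ⟨zero_lt_one, le_rfl⟩
          have := intermediate_value_Ioo (zero_le_one) hc
          have hmem : (0:ℝ) ∈ Set.Ioo (h.eval 0) (h.eval 1) := ⟨hneg, h1pos⟩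
          obtain ⟨y, hy, hyz⟩ := this hmem
          exact absurd hyz (ne_of_gt (hhIoc y ⟨hy.1, hy.2.le⟩))
        · exact hpos
      · exact hhIoc x ⟨hlt, hx.2⟩
    -- factor 1 - g = (1-X)^s * v
    have hw0 : (1 : ℝ[X]) - g ≠ 0 := fun hw => by
      have := congrArg (Polynomial.eval 0) hw
      simp [h0] at this
    obtain ⟨u, hwu, hund⟩ := ((1:ℝ[X]) - g).exists_eq_pow_rootMultiplicity_mul_and_not_dvd hw0 1
    set s := ((1:ℝ[X]) - g).rootMultiplicity 1 with hs
    set v : ℝ[X] := Polynomial.C ((-1:ℝ)^s) * u with hv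
    have hwv : (1:ℝ[X]) - g = ((1:ℝ[X]) - X)^s * v := by
      rw [hv, hwu]
      have h1 : (X : ℝ[X]) - Polynomial.C 1 = -((1:ℝ[X]) - X) := by
        rw [Polynomial.C_1]; ring
      have h2 : (Polynomial.C ((-1:ℝ)^s)) = ((-1 : ℝ[X]))^s := by
        rw [map_pow, map_neg, Polynomial.C_1]
      rw [h1, neg_pow, h2]
      ring
    have hv1 : v.eval 1 ≠ 0 := by
      rw [hv]
      simp only [Polynomial.eval_mul, Polynomial.eval_C]
      intro hz
      apply hund
      apply Polynomial.dvd_iff_isRoot.mpr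
      rw [Polynomial.IsRoot.def]
      rcases mul_eq_zero.mp hz with hc | hu
      · exact absurd hc (by positivity)
      · exact hu
    have hvIco : ∀ x ∈ Set.Ico (0:ℝ) 1, 0 < v.eval x := by
      intro x hx
      have hwx := hwIco x hx
      have : (1:ℝ) - g.eval x = (1 - x)^s * v.eval x := by
        have := congrArg (Polynomial.eval x) hwv
        simpa using this
      rw [this] at hwx
      have hxs : (0:ℝ) < (1 - x) ^ s := pow_pos (by linarith [hx.2]) s
      nlinarith [lt_of_not_ge (fun hle : v.eval x ≤ 0 => by nlinarith)]
    have hvIcc : ∀ x ∈ Set.Icc (0:ℝ) 1, 0 < v.eval x := by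
      intro x hx
      rcases eq_or_lt_of_le hx.2 with heq | hlt
      · subst heq
        rcases lt_or_gt_of_ne hv1 with hneg | hpos
        · exfalso
          have hc : ContinuousOn (fun y => v.eval y) (Set.Icc (0:ℝ) 1) :=
            (v.continuous_aeval).continuousOn
          have h0pos : 0 < v.eval 0 := hvIco 0 ⟨le_rfl, zero_lt_one⟩
          have := intermediate_value_Ioo' (zero_le_one) hc
          have hmem : (0:ℝ) ∈ Set.Ioo (v.eval 1) (v.eval 0) := ⟨hneg, h0pos⟩
          obtain ⟨y, hy, hyz⟩ := this hmem
          exact absurd hyz (ne_of_gt (hvIco y ⟨hy.1.le, hy.2⟩))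
        · exact hpos
      · exact hvIco x ⟨hx.1, hlt⟩
    obtain ⟨E1, hE1deg, hE1⟩ := bcoef_nonneg h hhIcc
    obtain ⟨E2, hE2deg, hE2⟩ := bcoef_nonneg v hvIcc
    set d := E1 + r + (E2 + s) + g.natDegree with hd
    set e1 := d - r with he1
    set e2 := d - s with he2
    have hde1 : e1 + r = d := by omega
    have hde2 : e2 + s = d := by omega
    have hE1e : E1 ≤ e1 := by omega
    have hE2e : E2 ≤ e2 := by omega
    -- representation of g with nonneg coefficients β
    set β : ℕ → ℝ := fun j => if r ≤ j ∧ j ≤ d then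
      bcoef h e1 (j - r) * ((e1.choose (j - r) : ℝ) / (d.choose j : ℝ)) else 0 with hβ
    have hβrep : g = ∑ j ∈ range (d + 1), β j • bernsteinPolynomial ℝ d j := by
      rw [sum_shift d r (by omega) _ (fun j hj => by
        rw [hβ]
        simp only [if_neg (by omega : ¬ (r ≤ j ∧ j ≤ d)), zero_smul])]
      have he1d : d - r = e1 := rfl
      rw [he1d]
      have hstep : ∀ k ∈ range (e1 + 1),
          β (k + r) • bernsteinPolynomial ℝ d (k + r)
            = bcoef h e1 k • ((X:ℝ[X])^r * bernsteinPolynomial ℝ e1 k) := by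
        intro k hk
        rw [mem_range, Nat.lt_succ_iff] at hk
        rw [X_pow_mul_bern e1 k r hk, hde1, smul_smul, hβ]
        have hcond : r ≤ k + r ∧ k + r ≤ d :=
          ⟨Nat.le_add_left r k, by rw [← hde1]; exact Nat.add_le_add_right hk r⟩
        simp only [if_pos hcond]
        have hkr : k + r - r = k := by omega
        rw [hkr]
      rw [Finset.sum_congr rfl hstep]
      simp_rw [← mul_smul_comm]
      rw [← Finset.mul_sum, ← bern_rep h e1 (by omega), ← hgh]
    have hβnn : ∀ j, 0 ≤ β j := by
      intro j
      simp only [hβ]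
      split_ifs with hc
      · apply mul_nonneg
        · exact hE1 e1 hE1e (j - r) (by omega)
        · positivity
      · exact le_refl 0
    set γ : ℕ → ℝ := fun j => if j ≤ e2 then
      bcoef v e2 j * ((e2.choose j : ℝ) / (d.choose j : ℝ)) else 0 with hγ
    have hγrep : (1:ℝ[X]) - g = ∑ j ∈ range (d + 1), γ j • bernsteinPolynomial ℝ d j := by
      rw [hwv]
      have hsub : range (e2 + 1) ⊆ range (d + 1) := Finset.range_subset_range.mpr (by omega)
      rw [← Finset.sum_subset hsub (fun j hj hnj => by
        simp only [mem_range] at hj hnj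
        rw [hγ]
        simp only [if_neg (by omega : ¬ j ≤ e2), zero_smul])]
      have hstep : ∀ k ∈ range (e2 + 1), γ k • bernsteinPolynomial ℝ d k
          = bcoef v e2 k • (((1:ℝ[X]) - X)^s * bernsteinPolynomial ℝ e2 k) := by
        intro k hk
        rw [mem_range, Nat.lt_succ_iff] at hk
        rw [one_sub_X_pow_mul_bern e2 k s hk, hde2, smul_smul, hγ]
        simp only [if_pos hk]
      rw [Finset.sum_congr rfl hstep]
      simp_rw [← mul_smul_comm]
      rw [← Finset.mul_sum, ← bern_rep v e2 (by omega)]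
    have hγnn : ∀ j, 0 ≤ γ j := by
      intro j
      simp only [hγ]
      split_ifs with hc
      · apply mul_nonneg
        · exact hE2 e2 hE2e j hc
        · positivity
      · exact le_refl 0
    have hsum : ∀ j ≤ d, β j + γ j = 1 := by
      have hzero : ∑ j ∈ range (d + 1), (β j + γ j - 1) • bernsteinPolynomial ℝ d j = 0 := by
        have hexp : ∑ j ∈ range (d + 1), (β j + γ j - 1) • bernsteinPolynomial ℝ d j
            = ((∑ j ∈ range (d + 1), β j • bernsteinPolynomial ℝ d j)
              + ∑ j ∈ range (d + 1), γ j • bernsteinPolynomial ℝ d j)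
              - ∑ j ∈ range (d + 1), bernsteinPolynomial ℝ d j := by
          rw [← Finset.sum_add_distrib, ← Finset.sum_sub_distrib]
          apply Finset.sum_congr rfl
          intro j _
          rw [sub_smul, add_smul, one_smul]
        rw [hexp, ← hβrep, ← hγrep, bernsteinPolynomial.sum]
        ring
      intro j hj
      have := bern_coeff_unique d _ hzero j hj
      linarith
    have heval0 : β 0 = 0 := by
      have he := congrArg (Polynomial.eval 0) hβrep
      simp only [Polynomial.eval_finset_sum, Polynomial.eval_smul, smul_eq_mul] at he
      rw [Finset.sum_eq_single 0 (fun k _ hk => by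
          simp [bernsteinPolynomial.eval_at_0, hk])
        (fun hk => by simp at hk)] at he
      simp [bernsteinPolynomial.eval_at_0] at he
      rw [← he]
      exact h0
    have hevald : β d = 1 := by
      have he := congrArg (Polynomial.eval 1) hβrep
      simp only [Polynomial.eval_finset_sum, Polynomial.eval_smul, smul_eq_mul] at he
      rw [Finset.sum_eq_single d (fun k _ hk => by
          simp [bernsteinPolynomial.eval_at_1, hk])
        (fun hk => by simp at hk)] at he
      simp [bernsteinPolynomial.eval_at_1] at he
      rw [← he]
      exact h1
    refine ⟨d, by omega, β, heval0, hevald, ?_, ?_⟩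
    · intro k hk1 hk2
      refine ⟨hβnn k, ?_⟩
      have h3 := hsum k (by omega)
      have h4 := hγnn k
      linarith
    · rw [hβrep]
      apply Finset.sum_congr rfl
      intro j _
      rw [Polynomial.smul_eq_C_mul]
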